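/- (Rejection soundness of the derived validator, single step.) Define the invariant Inv between a set v of validation states and a memory s : ℕ → ℤ by: Inv v s iff there exist (vs, cs) ∈ v and an assignment asgn such that asgn satisfies cs and vs^asgn ≡ s. Then for every program p : Prog, all q, c, a : ℤ, all memories s, s', and every set v of validation states: if sstep_p q c s = (a, s') and Inv v s, then there exists v' with vstep_p q a v = some v' and Inv v' s'. -/

import Mathlib

/-- Variables are natural numbers. -/
abbrev Var := ℕ

/-- Binary integer operations: +, −, ×, ÷ (integer division). -/
inductive Op
  | add | sub | mul | div
deriving DecidableEq

def Op.denote : Op → ℤ → ℤ → ℤ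
  | .add => (· + ·)
  | .sub => (· - ·)
  | .mul => (· * ·)
  | .div => (· / ·)

/-- Symbolic server expressions. -/
inductive SExp
  | const : ℤ → SExp
  | read : ℕ → SExp
  | bin : Op → SExp → SExp → SExp
deriving DecidableEq

/-- Evaluation of a server expression on a memory `s : ℕ → ℤ`, written `e^s`. -/
def SExp.eval (s : ℕ → ℤ) : SExp → ℤ
  | .const z => z
  | .read k => s k
  | .bin op e₁ e₂ => op.denote (e₁.eval s) (e₂.eval s)

/-- Validator expressions. -/
inductive VExp
  | const : ℤ → VExp
  | var : Var → VExp
  | bin : Op → VExp → VExp → VExp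
deriving DecidableEq

/-- Evaluation of a validator expression under an assignment, written `e^asgn`. -/
def VExp.eval (asgn : Var → ℤ) : VExp → ℤ
  | .const z => z
  | .var x => asgn x
  | .bin op e₁ e₂ => op.denote (e₁.eval asgn) (e₂.eval asgn)

/-- Symbolization `e^vs` of a server expression: replace every `read src` by `var (vs src)`. -/
def SExp.symb (vs : ℕ → Var) : SExp → VExp
  | .const z => .const z
  | .read k => .var (vs k)
  | .bin op e₁ e₂ => .bin op (e₁.symb vs) (e₂.symb vs)

/-- Comparison operators for constraints: <, ≤, =. -/
inductive Cmp
  | lt | le | eq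
deriving DecidableEq

def Cmp.holds : Cmp → ℤ → ℤ → Prop
  | .lt => (· < ·)
  | .le => (· ≤ ·)
  | .eq => (· = ·)

/-- A constraint is a triple of two validator expressions and a comparison. -/
structure Constraint where
  lhs : VExp
  cmp : Cmp
  rhs : VExp
deriving DecidableEq

/-- `asgn` satisfies the constraint set `cs`. -/
def Sat (asgn : Var → ℤ) (cs : Finset Constraint) : Prop :=
  ∀ c ∈ cs, c.cmp.holds (c.lhs.eval asgn) (c.rhs.eval asgn)

/-- A variable occurs in a validator expression. -/
def VExp.occurs (x : Var) : VExp → Prop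
  | .const _ => False
  | .var y => y = x
  | .bin _ e₁ e₂ => e₁.occurs x ∨ e₂.occurs x

/-- `x` is fresh for the constraint set `cs`: it occurs in no constraint of `cs`. -/
def FreshCs (x : Var) (cs : Finset Constraint) : Prop :=
  ∀ c ∈ cs, ¬ c.lhs.occurs x ∧ ¬ c.rhs.occurs x

/-- `x` is fresh for `vs : ℕ → Var`. -/
def FreshVs (x : Var) (vs : ℕ → Var) : Prop :=
  ∀ k : ℕ, vs k ≠ x

/-- One more than the largest variable occurring in a validator expression
(a strict upper bound on its variables). -/
def VExp.maxVar : VExp → ℕ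
  | .const _ => 0
  | .var x => x + 1
  | .bin _ e₁ e₂ => max e₁.maxVar e₂.maxVar

def Constraint.maxVar (c : Constraint) : ℕ :=
  max c.lhs.maxVar c.rhs.maxVar

/-- A validation state: a map from addresses to their representing variables
(with finite support, so that fresh variables exist), and a finite set of
constraints. -/
abbrev VState := (ℕ →₀ ℕ) × Finset Constraint

/-- A fixed variable fresh for both `vs` and `cs`. -/
def freshVar (vs : ℕ →₀ ℕ) (cs : Finset Constraint) : Var :=
  max (vs.support.sup ⇑vs) (cs.sup Constraint.maxVar) + 1

/-- The write rule on validation states. -/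
noncomputable def writeV (d : ℕ) (e : SExp) (w : VState) : VState :=
  let x := freshVar w.1 w.2
  (w.1.update d x, insert ⟨VExp.var x, Cmp.eq, e.symb w.1⟩ w.2)

/-- The havoc rule on validation states. -/
noncomputable def havocV (d : ℕ) (w : VState) : VState :=
  (w.1.update d (freshVar w.1 w.2), w.2)

/-- Programs in the `Prog` language. -/
inductive Prog
  | ret
  | write (dst : ℕ) (e : SExp) (p : Prog)
  | branch (e₁ e₂ : SExp) (p₁ p₂ : Prog)

/-- Semantics of `Prog` on integer memories. -/
def evalProg : Prog → (ℕ → ℤ) → (ℕ → ℤ)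
  | .ret, s => s
  | .write d e p, s => evalProg p (Function.update s d (e.eval s))
  | .branch e₁ e₂ p₁ p₂, s =>
      if e₁.eval s ≤ e₂.eval s then evalProg p₁ s else evalProg p₂ s

/-- The symbolic executor on validation states. -/
noncomputable def exec : Prog → VState → Finset VState
  | .ret, w => {w}
  | .write d e p, w => exec p (writeV d e w)
  | .branch e₁ e₂ p₁ p₂, w =>
      exec p₁ (w.1, insert ⟨e₁.symb w.1, Cmp.le, e₂.symb w.1⟩ w.2) ∪
      exec p₂ (w.1, insert ⟨e₂.symb w.1, Cmp.lt, e₁.symb w.1⟩ w.2)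

/-- A constraint set is solvable iff some assignment satisfies it. -/
def Solvable (cs : Finset Constraint) : Prop :=
  ∃ asgn : Var → ℤ, Sat asgn cs

/-- The step function of the server derived from program `p`:
write the choice to address 0 and the query to address 1, run `p`,
and answer with the value at address 1. -/
def sstepP (p : Prog) (q c : ℤ) (s : ℕ → ℤ) : ℤ × (ℕ → ℤ) :=
  let s₃ := evalProg p (Function.update (Function.update s 0 c) 1 q)
  (s₃ 1, s₃)

open Classical in
/-- The step function of the validator derived from program `p`. -/
noncomputable def vstepP (p : Prog) (q a : ℤ) (v : Finset VState) :
    Option (Finset VState) :=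
  let v' : Finset VState := v.biUnion (fun w =>
    let w₂ := writeV 1 (SExp.const q) (havocV 0 w)
    (exec p w₂).biUnion (fun w₃ =>
      let cs₄ := insert ⟨VExp.var (w₃.1 1), Cmp.eq, VExp.const a⟩ w₃.2
      if Solvable cs₄ then {(w₃.1, cs₄)} else ∅))
  if v' = ∅ then none else some v'

/-- The invariant between a set of validation states and a server memory. -/
def InvVS (v : Finset VState) (s : ℕ → ℤ) : Prop :=
  ∃ w ∈ v, ∃ asgn : Var → ℤ, Sat asgn w.2 ∧ ∀ k : ℕ, asgn (w.1 k) = s k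

lemma occurs_lt_maxVar {x : Var} {e : VExp} (h : e.occurs x) : x < e.maxVar := by
  induction e with
  | const z => exact absurd h (by simp [VExp.occurs])
  | var y =>
      have h' : y = x := h
      subst h'
      exact Nat.lt_succ_self y
  | bin op e₁ e₂ ih₁ ih₂ =>
      rcases h with h | h
      · exact lt_max_of_lt_left (ih₁ h)
      · exact lt_max_of_lt_right (ih₂ h)

lemma eval_update_of_not_occurs {x : Var} {e : VExp} (h : ¬ e.occurs x)
    (asgn : Var → ℤ) (z : ℤ) :
    e.eval (Function.update asgn x z) = e.eval asgn := by
  induction e with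
  | const z => rfl
  | var y =>
      simp [VExp.occurs] at h
      simp [VExp.eval, Function.update, h]
  | bin op e₁ e₂ ih₁ ih₂ =>
      simp [VExp.occurs] at h
      simp [VExp.eval, ih₁ h.1, ih₂ h.2]

lemma eval_update_of_le {x : Var} {e : VExp} (h : e.maxVar ≤ x)
    (asgn : Var → ℤ) (z : ℤ) :
    e.eval (Function.update asgn x z) = e.eval asgn :=
  eval_update_of_not_occurs
    (fun hc => absurd h (not_le.mpr (occurs_lt_maxVar hc))) asgn z

lemma Sat_update {x : Var} {cs : Finset Constraint}
    (h : cs.sup Constraint.maxVar < x) {asgn : Var → ℤ}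
    (hs : Sat asgn cs) (z : ℤ) : Sat (Function.update asgn x z) cs := by
  intro cc hc
  have hle : cc.maxVar ≤ cs.sup Constraint.maxVar := Finset.le_sup hc
  have h1 : cc.lhs.maxVar ≤ x := le_trans (le_trans (le_max_left _ _) hle) h.le
  have h2 : cc.rhs.maxVar ≤ x := le_trans (le_trans (le_max_right _ _) hle) h.le
  rw [eval_update_of_le h1, eval_update_of_le h2]
  exact hs cc hc

lemma symb_eval (e : SExp) (vs : ℕ → Var) (asgn : Var → ℤ) :
    (e.symb vs).eval asgn = e.eval (fun k => asgn (vs k)) := by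
  induction e with
  | const z => rfl
  | read k => rfl
  | bin op e₁ e₂ ih₁ ih₂ => simp [SExp.symb, SExp.eval, VExp.eval, ih₁, ih₂]

lemma freshVar_vs (vs : ℕ →₀ ℕ) (cs : Finset Constraint) (k : ℕ) :
    vs k < freshVar vs cs := by
  by_cases hk : k ∈ vs.support
  · have h1 : vs k ≤ vs.support.sup ⇑vs := Finset.le_sup hk
    exact Nat.lt_succ_of_le (le_trans h1 (le_max_left _ _))
  · have h0 : vs k = 0 := Finsupp.notMem_support_iff.mp hk
    rw [h0]
    exact Nat.succ_pos _

lemma freshVar_cs (vs : ℕ →₀ ℕ) (cs : Finset Constraint) :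
    cs.sup Constraint.maxVar < freshVar vs cs := by
  exact Nat.lt_succ_of_le (le_max_right _ _)

/-- Main soundness of the symbolic executor. -/
lemma exec_sound (p : Prog) :
    ∀ (w : VState) (asgn : Var → ℤ) (s : ℕ → ℤ),
      Sat asgn w.2 → (∀ k, asgn (w.1 k) = s k) →
      ∃ w₃ ∈ exec p w, ∃ asgn' : Var → ℤ,
        Sat asgn' w₃.2 ∧ ∀ k, asgn' (w₃.1 k) = evalProg p s k := by
  induction p with
  | ret =>
      intro w asgn s hsat hag
      exact ⟨w, by simp [exec], asgn, hsat, hag⟩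
  | write d e p ih =>
      intro w asgn s hsat hag
      set x := freshVar w.1 w.2 with hx
      set asgn₁ := Function.update asgn x (e.eval s) with hasgn₁
      have hvsne : ∀ k, w.1 k ≠ x := fun k => (freshVar_vs w.1 w.2 k).ne
      have hsymb : (e.symb w.1).eval asgn₁ = e.eval s := by
        rw [symb_eval]
        congr 1
        funext k
        rw [hasgn₁, Function.update_of_ne (hvsne k), hag k]
      have hsat₁ : Sat asgn₁ (writeV d e w).2 := by
        intro cc hcc
        simp only [writeV, Finset.mem_insert] at hcc
        rcases hcc with rfl | hcc
        · simpa [VExp.eval, Cmp.holds, hasgn₁, hx] using hsymb.symm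
        · exact Sat_update (freshVar_cs w.1 w.2) hsat (e.eval s) cc hcc
      have hag₁ : ∀ k, asgn₁ ((writeV d e w).1 k) =
          Function.update s d (e.eval s) k := by
        intro k
        simp only [writeV, Finsupp.coe_update]
        by_cases hk : k = d
        · subst hk; simp [hasgn₁, hx]
        · rw [Function.update_of_ne hk, Function.update_of_ne hk,
            hasgn₁, Function.update_of_ne (hvsne k), hag k]
      exact ih (writeV d e w) asgn₁ _ hsat₁ hag₁
  | branch e₁ e₂ p₁ p₂ ih₁ ih₂ =>
      intro w asgn s hsat hag
      have hsymb : ∀ e : SExp, (e.symb w.1).eval asgn = e.eval s := by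
        intro e; rw [symb_eval]; congr 1; funext k; exact hag k
      by_cases hle : e₁.eval s ≤ e₂.eval s
      · obtain ⟨w₃, hw₃, asgn', h1, h2⟩ :=
          ih₁ (w.1, insert ⟨e₁.symb w.1, Cmp.le, e₂.symb w.1⟩ w.2) asgn s
            (by
              intro cc hcc
              rcases Finset.mem_insert.mp hcc with rfl | hcc
              · simpa [Cmp.holds, hsymb] using hle
              · exact hsat cc hcc) hag
        refine ⟨w₃, ?_, asgn', h1, ?_⟩
        · simp only [exec, Finset.mem_union]; exact Or.inl hw₃
        · simpa [evalProg, hle] using h2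
      · obtain ⟨w₃, hw₃, asgn', h1, h2⟩ :=
          ih₂ (w.1, insert ⟨e₂.symb w.1, Cmp.lt, e₁.symb w.1⟩ w.2) asgn s
            (by
              intro cc hcc
              rcases Finset.mem_insert.mp hcc with rfl | hcc
              · simpa [Cmp.holds, hsymb] using lt_of_not_ge hle
              · exact hsat cc hcc) hag
        refine ⟨w₃, ?_, asgn', h1, ?_⟩
        · simp only [exec, Finset.mem_union]; exact Or.inr hw₃
        · simpa [evalProg, hle] using h2

/-- Rejection soundness of the derived validator, single step. -/
theorem derived_validator_sound_step
    (p : Prog) (q c a : ℤ) (s s' : ℕ → ℤ) (v : Finset VState)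
    (hs : sstepP p q c s = (a, s')) (hinv : InvVS v s) :
    ∃ v' : Finset VState, vstepP p q a v = some v' ∧ InvVS v' s' := by
  classical
  obtain ⟨w, hwv, asgn, hsat, hag⟩ := hinv
  -- the memory after writing the choice and query
  set m : ℕ → ℤ := Function.update (Function.update s 0 c) 1 q with hm
  have ha : a = evalProg p m 1 := by
    have := congrArg Prod.fst hs; simpa [sstepP] using this.symm
  have hs' : s' = evalProg p m := by
    have := congrArg Prod.snd hs; simpa [sstepP] using this.symm
  -- havoc 0
  set x := freshVar w.1 w.2 with hx
  set w₁ := havocV 0 w with hw₁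
  set asgn₁ := Function.update asgn x c with hasgn₁
  have hvsne : ∀ k, w.1 k ≠ x := fun k => (freshVar_vs w.1 w.2 k).ne
  have hsat₁ : Sat asgn₁ w₁.2 := Sat_update (freshVar_cs w.1 w.2) hsat c
  have hag₁ : ∀ k, asgn₁ (w₁.1 k) = Function.update s 0 c k := by
    intro k
    simp only [hw₁, havocV, Finsupp.coe_update]
    by_cases hk : k = 0
    · subst hk; simp [hasgn₁, hx]
    · rw [Function.update_of_ne hk, Function.update_of_ne hk,
        hasgn₁, Function.update_of_ne (hvsne k), hag k]
  -- write 1 (const q)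
  set y := freshVar w₁.1 w₁.2 with hy
  set w₂ := writeV 1 (SExp.const q) w₁ with hw₂
  set asgn₂ := Function.update asgn₁ y q with hasgn₂
  have hvsne₁ : ∀ k, w₁.1 k ≠ y := fun k => (freshVar_vs w₁.1 w₁.2 k).ne
  have hsat₂ : Sat asgn₂ w₂.2 := by
    intro cc hcc
    simp only [hw₂, writeV, Finset.mem_insert] at hcc
    rcases hcc with rfl | hcc
    · simp [VExp.eval, Cmp.holds, hasgn₂, SExp.symb, hy]
    · exact Sat_update (freshVar_cs w₁.1 w₁.2) hsat₁ q cc hcc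
  have hag₂ : ∀ k, asgn₂ (w₂.1 k) = m k := by
    intro k
    simp only [hw₂, writeV, Finsupp.coe_update, hm]
    by_cases hk : k = 1
    · subst hk; simp [hasgn₂, hy]
    · rw [Function.update_of_ne hk, Function.update_of_ne hk,
        hasgn₂, Function.update_of_ne (hvsne₁ k), hag₁ k]
  -- run the symbolic executor
  obtain ⟨w₃, hw₃, asgn₃, hsat₃, hag₃⟩ := exec_sound p w₂ asgn₂ m hsat₂ hag₂
  -- the final constraint
  set cs₄ := insert (⟨VExp.var (w₃.1 1), Cmp.eq, VExp.const a⟩ : Constraint) w₃.2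
    with hcs₄
  have hsat₄ : Sat asgn₃ cs₄ := by
    intro cc hcc
    rcases Finset.mem_insert.mp hcc with rfl | hcc
    · simpa [VExp.eval, Cmp.holds, ha] using hag₃ 1
    · exact hsat₃ cc hcc
  have hsolv : Solvable cs₄ := ⟨asgn₃, hsat₄⟩
  -- membership of the resulting state in v'
  set v' : Finset VState := v.biUnion (fun w =>
    let w₂ := writeV 1 (SExp.const q) (havocV 0 w)
    (exec p w₂).biUnion (fun w₃ =>
      let cs₄ := insert ⟨VExp.var (w₃.1 1), Cmp.eq, VExp.const a⟩ w₃.2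
      if Solvable cs₄ then {(w₃.1, cs₄)} else ∅)) with hv'
  have hmem : (w₃.1, cs₄) ∈ v' := by
    rw [hv']
    refine Finset.mem_biUnion.mpr ⟨w, hwv, ?_⟩
    refine Finset.mem_biUnion.mpr ⟨w₃, hw₃, ?_⟩
    simp only [← hcs₄, if_pos hsolv, Finset.mem_singleton]
  have hne : v' ≠ ∅ := Finset.ne_empty_of_mem hmem
  refine ⟨v', ?_, ?_⟩
  · simp only [vstepP, ← hv', if_neg hne]
  · exact ⟨(w₃.1, cs₄), hmem, asgn₃, hsat₄, by rw [hs']; exact hag₃⟩
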